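/- Let n ≥ 1 and q ≥ 2 be integers. Let Λ = {x ∈ ℤ^{n+1} : x₁ + ⋯ + x_{n+1} = 0}, let w : ℤ^{n+1} → ℤ^{n+1} be the cyclic shift w(x₁, …, x_{n+1}) = (x_{n+1}, x₁, …, xₙ) (so w has order n+1 and preserves Λ), and set v = e₁ − e_{n+1}, the difference of the first and last standard basis vectors. Then for every integer r ≥ 0: if w^r(v) − v lies in the set {q·w(x) − x : x ∈ Λ}, then n+1 divides r. -/

import Mathlib

/-- The cyclic shift `w(x₁, …, xₙ) = (xₙ, x₁, …, x_{n−1})` on `ℤ^n`. -/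
def cycShift (n : ℕ) [NeZero n] (x : Fin n → ℤ) : Fin n → ℤ :=
  fun i => x (i - 1)

open Fin.NatCast Fin.CommRing

private lemma cyc_iterate (n r : ℕ) (z : Fin (n+1) → ℤ) :
    (cycShift (n+1))^[r] z = fun i => z (i - (r : Fin (n+1))) := by
  induction r with
  | zero => simp
  | succ r ih =>
    rw [Function.iterate_succ', Function.comp_def]
    funext i
    simp only [cycShift, ih]
    congr 1
    push_cast
    ring

private lemma sum_pick (n : ℕ) (q : ℤ) (j0 : ℕ) (hj0 : j0 < n+1)
    (P : ℕ → Prop) [DecidablePred P] (hP : ∀ j < n+1, (P j ↔ j = j0)) :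
    (∑ j ∈ Finset.range (n+1), if P j then q^(n-j) else 0) = q^(n-j0) := by
  rw [Finset.sum_eq_single_of_mem j0 (Finset.mem_range.2 hj0)]
  · rw [if_pos ((hP j0 hj0).2 rfl)]
  · intro b hb hne
    rw [if_neg]
    exact fun hp => hne ((hP b (Finset.mem_range.1 hb)).1 hp)

theorem stmt_6 (n : ℕ) (hn : 1 ≤ n) (q : ℤ) (hq : 2 ≤ q) (r : ℕ)
    (h : ∃ x : Fin (n + 1) → ℤ, (∑ i, x i) = 0 ∧
      (fun i => q * cycShift (n + 1) x i - x i) =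
        (cycShift (n + 1))^[r] (Pi.single 0 1 - Pi.single (Fin.last n) 1)
          - (Pi.single 0 1 - Pi.single (Fin.last n) 1)) :
    n + 1 ∣ r := by
  obtain ⟨x, -, hx⟩ := h
  by_contra hdvd
  set s := r % (n+1) with hsdef
  have hs0 : s ≠ 0 := fun h0 => hdvd (Nat.dvd_of_mod_eq_zero h0)
  have hslt : s < n+1 := Nat.mod_lt _ (Nat.succ_pos n)
  set V : Fin (n+1) → ℤ := Pi.single 0 1 - Pi.single (Fin.last n) 1 with hV
  have hco : ∀ i : Fin (n+1), q * x (i - 1) - x i = V (i - (r : Fin (n+1))) - V i := by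
    intro i
    have h1 := congrFun hx i
    rw [cyc_iterate] at h1
    simpa [cycShift] using h1
  set X : ℕ → ℤ := fun k => x (k : Fin (n+1)) with hX
  set Y : ℕ → ℤ := fun k => V ((k : Fin (n+1)) - (r : Fin (n+1))) - V (k : Fin (n+1)) with hYdef
  have hrec : ∀ k : ℕ, q * X k - X (k+1) = Y (k+1) := by
    intro k
    have h1 := hco ((k+1 : ℕ) : Fin (n+1))
    have h2 : (((k+1 : ℕ) : Fin (n+1))) - 1 = ((k : ℕ) : Fin (n+1)) := by push_cast; ring
    rw [h2] at h1
    exact h1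
  have htel : ∀ M : ℕ, q ^ M * X 0 - X M = ∑ j ∈ Finset.range M, q ^ (M - 1 - j) * Y (j+1) := by
    intro M
    induction M with
    | zero => simp
    | succ M ih =>
      rw [Finset.sum_range_succ]
      have hpow : ∀ j ∈ Finset.range M,
          q ^ (M + 1 - 1 - j) * Y (j+1) = q * (q ^ (M - 1 - j) * Y (j+1)) := by
        intro j hj
        rw [Finset.mem_range] at hj
        rw [← mul_assoc, ← pow_succ']
        congr 2
        omega
      rw [Finset.sum_congr rfl hpow, ← Finset.mul_sum, ← ih]
      have hr := hrec M
      have hMM : M + 1 - 1 - M = 0 := by omega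
      rw [hMM, pow_zero, one_mul, ← hr, pow_succ']
      ring
  have hXtop : X (n+1) = X 0 := by
    simp only [hX]
    congr 1
    push_cast
    simp
  have hkey : (q ^ (n+1) - 1) * X 0 = ∑ j ∈ Finset.range (n+1), q ^ (n - j) * Y (j+1) := by
    have h1 := htel (n+1)
    rw [hXtop] at h1
    have he : ∀ j ∈ Finset.range (n+1),
        q ^ (n + 1 - 1 - j) * Y (j+1) = q ^ (n - j) * Y (j+1) := by
      intro j _
      rfl
    rw [Finset.sum_congr rfl he] at h1
    linarith [h1]
  -- explicit formula for Y (j+1)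
  have hlast : (Fin.last n) = (-1 : Fin (n+1)) := by
    apply Fin.ext; simp [Fin.coe_neg_one]
  have hYval : ∀ j, j < n+1 → Y (j+1) =
      (if (j+1) % (n+1) = s then 1 else 0) - (if (j+2) % (n+1) = s then 1 else 0)
      - (if j = n then 1 else 0) + (if j = n-1 then 1 else 0) := by
    intro j hj
    have hc0 : (((j+1 : ℕ) : Fin (n+1)) - ((r : ℕ) : Fin (n+1)) = 0) ↔ (j+1) % (n+1) = s := by
      rw [sub_eq_zero, Fin.ext_iff, Fin.val_natCast, Fin.val_natCast, hsdef]
    have hclast : (((j+1 : ℕ) : Fin (n+1)) - ((r : ℕ) : Fin (n+1)) = Fin.last n)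
        ↔ (j+2) % (n+1) = s := by
      rw [hlast, sub_eq_iff_eq_add, neg_add_eq_sub, eq_sub_iff_add_eq]
      have hcc : (((j+1 : ℕ) : Fin (n+1)) + 1) = ((j+2 : ℕ) : Fin (n+1)) := by
        push_cast; ring
      rw [hcc, Fin.ext_iff, Fin.val_natCast, Fin.val_natCast, hsdef]
    have hv0 : (((j+1 : ℕ) : Fin (n+1)) = 0) ↔ j = n := by
      rw [show (0 : Fin (n+1)) = ((0 : ℕ) : Fin (n+1)) by simp,
        Fin.ext_iff, Fin.val_natCast, Fin.val_natCast, Nat.zero_mod]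
      rcases Nat.lt_or_ge j n with hlt | hge
      · rw [Nat.mod_eq_of_lt (by omega)]; omega
      · have hjn : j = n := by omega
        subst hjn
        rw [Nat.mod_self]
        omega
    have hvlast : (((j+1 : ℕ) : Fin (n+1)) = Fin.last n) ↔ j = n-1 := by
      rw [Fin.ext_iff, Fin.val_natCast, Fin.val_last]
      rcases Nat.lt_or_ge j n with hlt | hge
      · rw [Nat.mod_eq_of_lt (by omega)]; omega
      · have hjn : j = n := by omega
        subst hjn
        rw [Nat.mod_self]; omega
    simp only [hYdef, hV, Pi.sub_apply, Pi.single_apply]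
    simp only [hc0, hclast, hv0, hvlast]
    ring
  -- rewrite the sum
  have hsum : ∑ j ∈ Finset.range (n+1), q ^ (n - j) * Y (j+1) =
      (∑ j ∈ Finset.range (n+1), if (j+1) % (n+1) = s then q^(n-j) else 0)
      - (∑ j ∈ Finset.range (n+1), if (j+2) % (n+1) = s then q^(n-j) else 0)
      - (∑ j ∈ Finset.range (n+1), if j = n then q^(n-j) else 0)
      + (∑ j ∈ Finset.range (n+1), if j = n-1 then q^(n-j) else 0) := by
    rw [← Finset.sum_sub_distrib, ← Finset.sum_sub_distrib, ← Finset.sum_add_distrib]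
    apply Finset.sum_congr rfl
    intro j hj
    rw [hYval j (Finset.mem_range.1 hj)]
    simp only [mul_sub, mul_add, mul_ite, mul_one, mul_zero]
  have hS3 : (∑ j ∈ Finset.range (n+1), if j = n then q^(n-j) else 0) = 1 := by
    rw [sum_pick n q n (by omega) _ (fun j _ => Iff.rfl)]
    simp
  have hS4 : (∑ j ∈ Finset.range (n+1), if j = n-1 then q^(n-j) else 0) = q := by
    rw [sum_pick n q (n-1) (by omega) _ (fun j _ => Iff.rfl),
      show n - (n-1) = 1 by omega, pow_one]
  have hS1 : (∑ j ∈ Finset.range (n+1), if (j+1) % (n+1) = s then q^(n-j) else 0)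
      = q^(n-(s-1)) := by
    apply sum_pick n q (s-1) (by omega)
    intro j hj
    rcases Nat.lt_or_ge j n with hlt | hge
    · rw [Nat.mod_eq_of_lt (by omega)]; omega
    · have hjn : j = n := by omega
      subst hjn
      rw [Nat.mod_self]; omega
  have hq1 : (1:ℤ) ≤ q := by linarith
  have hq0 : (0:ℤ) ≤ q := by linarith
  by_cases hs1 : s = 1
  · -- s = 1
    have hS2 : (∑ j ∈ Finset.range (n+1), if (j+2) % (n+1) = s then q^(n-j) else 0) = 1 := by
      rw [sum_pick n q n (by omega) _ ?_]
      · simp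
      · intro j hj
        rcases Nat.lt_or_ge (j+2) (n+1) with hlt | hge
        · rw [Nat.mod_eq_of_lt hlt]; omega
        · have hcase : j = n - 1 ∨ j = n := by omega
          rcases hcase with h1 | h1
          · rw [show j + 2 = n + 1 by omega, Nat.mod_self]; omega
          · rw [show j + 2 = (n+1) + 1 by omega, Nat.add_mod_left,
              Nat.mod_eq_of_lt (by omega)]
            omega
    rw [hsum, hS1, hS2, hS3, hS4, hs1, show n - (1-1) = n by omega] at hkey
    -- (q^{n+1}-1) * X0 = q^n - 1 - 1 + q
    have hqn : q ≤ q^n := by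
      calc q = q^1 := (pow_one q).symm
      _ ≤ q^n := pow_le_pow_right₀ hq1 hn
    have hps : q^(n+1) = q * q^n := by rw [pow_succ]; ring
    have hqn0 : (0:ℤ) ≤ q^n := by positivity
    have h2qn : 2 * q^n ≤ q * q^n := mul_le_mul_of_nonneg_right hq hqn0
    have hN1 : (1:ℤ) ≤ q^(n+1) - 1 := by linarith
    rcases le_or_gt (X 0) 0 with hx0 | hx0
    · have h1 : (q^(n+1) - 1) * X 0 ≤ 0 :=
        mul_nonpos_of_nonneg_of_nonpos (by linarith) hx0
      linarith
    · have h1 : (1:ℤ) ≤ X 0 := hx0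
      have h2 : (q^(n+1) - 1) * 1 ≤ (q^(n+1) - 1) * X 0 :=
        mul_le_mul_of_nonneg_left h1 (by linarith)
      linarith
  · -- s ≥ 2
    have hs2 : 2 ≤ s := by omega
    have hS2 : (∑ j ∈ Finset.range (n+1), if (j+2) % (n+1) = s then q^(n-j) else 0)
        = q^(n-(s-2)) := by
      apply sum_pick n q (s-2) (by omega)
      intro j hj
      rcases Nat.lt_or_ge (j+2) (n+1) with hlt | hge
      · rw [Nat.mod_eq_of_lt hlt]; omega
      · have hcase : j = n - 1 ∨ j = n := by omega
        rcases hcase with h1 | h1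
        · rw [show j + 2 = n + 1 by omega, Nat.mod_self]; omega
        · rw [show j + 2 = (n+1) + 1 by omega, Nat.add_mod_left,
            Nat.mod_eq_of_lt (by omega)]
          omega
    rw [hsum, hS1, hS2, hS3, hS4] at hkey
    set a : ℤ := q^(n-(s-1)) with ha
    have hb : q^(n-(s-2)) = q * a := by
      rw [ha, ← pow_succ']
      congr 1
      omega
    rw [hb] at hkey
    -- (q^{n+1}-1) * X0 = a - q*a - 1 + q
    have ha0 : (0:ℤ) ≤ a := by rw [ha]; positivity
    have haq : q ≤ a := by
      rw [ha]
      calc q = q^1 := (pow_one q).symm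
      _ ≤ q^(n-(s-1)) := pow_le_pow_right₀ hq1 (by omega)
    have hNs : q^(n+1) = a * q^s := by
      rw [ha, ← pow_add]
      congr 1
      omega
    have hqs : q * q ≤ q^s := by
      calc q * q = q^2 := by ring
      _ ≤ q^s := pow_le_pow_right₀ hq1 hs2
    have key1 : a * (q*q) ≤ a * q^s := mul_le_mul_of_nonneg_left hqs ha0
    have h2qa : 2 * (q*a) ≤ q * (q*a) :=
      mul_le_mul_of_nonneg_right hq (mul_nonneg hq0 ha0)
    have hqa4 : (4:ℤ) ≤ q * a := by
      have h44 := mul_le_mul hq haq hq0 hq0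
      linarith
    have h2a : 2 * a ≤ q * a := mul_le_mul_of_nonneg_right hq ha0
    have hN1 : (1:ℤ) ≤ q^(n+1) - 1 := by linarith
    rcases le_or_gt 0 (X 0) with hx0 | hx0
    · have h1 : 0 ≤ (q^(n+1) - 1) * X 0 := mul_nonneg (by linarith) hx0
      linarith
    · have h1 : X 0 ≤ -1 := by omega
      have h2 : (q^(n+1) - 1) * X 0 ≤ (q^(n+1) - 1) * (-1) :=
        mul_le_mul_of_nonneg_left h1 (by linarith)
      linarith
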